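/- arXiv:1308.3381 — 2 statements merged into one kernel-verified Lean document; each statement's English description precedes it below -/
import Mathlib

section
/- For λ > 0 and S symmetric positive semidefinite, the graphical lasso objective f(Θ) = log det Θ − tr(SΘ) − λ‖Θ‖₁ tends to −∞ both as the smallest eigenvalue of Θ tends to 0 and as ‖Θ‖₁ → ∞; consequently the supremum of f over positive definite matrices is finite. -/
open Matrix Finset

open Matrix Finset

private lemma psd_trace_nonneg {p : ℕ} {M : Matrix (Fin p) (Fin p) ℝ}
    (hM : M.PosSemidef) : 0 ≤ M.trace := by
  rw [Matrix.trace]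
  refine Finset.sum_nonneg fun i _ => ?_
  exact hM.diag_nonneg

open scoped MatrixOrder in
private lemma trace_SΘ_nonneg {p : ℕ} {S Θ : Matrix (Fin p) (Fin p) ℝ}
    (hS : S.PosSemidef) (hΘ : Θ.PosDef) : 0 ≤ (S * Θ).trace := by
  have hS0 : (0 : Matrix (Fin p) (Fin p) ℝ) ≤ S := Matrix.nonneg_iff_posSemidef.mpr hS
  have h1 : S * Θ = CFC.sqrt S * CFC.sqrt S * Θ := by rw [CFC.sqrt_mul_sqrt_self S hS0]
  have h2 := Matrix.trace_mul_cycle (CFC.sqrt S) Θ (CFC.sqrt S)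
  have h3 : Matrix.PosSemidef (CFC.sqrt S * Θ * (CFC.sqrt S)ᴴ) :=
    Matrix.PosSemidef.mul_mul_conjTranspose_same hΘ.posSemidef (CFC.sqrt S)
  rw [(Matrix.nonneg_iff_posSemidef.mp (CFC.sqrt_nonneg S)).1.eq] at h3
  rw [h1, ← h2]
  exact psd_trace_nonneg h3

private lemma trace_le_l1 {p : ℕ} {Θ : Matrix (Fin p) (Fin p) ℝ} :
    Θ.trace ≤ ∑ i, ∑ j, |Θ i j| := by
  rw [Matrix.trace]
  refine Finset.sum_le_sum fun i _ => ?_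
  calc Θ.diag i ≤ |Θ i i| := le_abs_self _
  _ ≤ ∑ j, |Θ i j| := Finset.single_le_sum (f := fun j => |Θ i j|) (fun j _ => abs_nonneg _) (mem_univ i)

private lemma trace_eq_sum_eigs {p : ℕ} {Θ : Matrix (Fin p) (Fin p) ℝ}
    (h : Θ.IsHermitian) : Θ.trace = ∑ i, h.eigenvalues i := by
  nth_rewrite 1 [h.spectral_theorem]
  rw [Unitary.conjStarAlgAut_apply]
  rw [Matrix.trace_mul_comm, ← mul_assoc,
    (Matrix.mem_unitaryGroup_iff').mp h.eigenvectorUnitary.2, one_mul,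
    Matrix.trace_diagonal]
  simp

private lemma logdet_eq {p : ℕ} {Θ : Matrix (Fin p) (Fin p) ℝ} (hΘ : Θ.PosDef) :
    Real.log Θ.det = ∑ i, Real.log (hΘ.1.eigenvalues i) := by
  rw [hΘ.1.det_eq_prod_eigenvalues]
  simp only [RCLike.ofReal_real_eq_id, id_eq]
  rw [Real.log_prod]
  exact fun i _ => ne_of_gt (hΘ.eigenvalues_pos i)


private lemma log_le_aux {c μ : ℝ} (hc : 0 < c) (hμ : 0 < μ) :
    Real.log μ ≤ Real.log c + μ / c - 1 := by
  have h1 : Real.log μ = Real.log c + Real.log (μ / c) := by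
    rw [← Real.log_mul (ne_of_gt hc) (by positivity)]
    congr 1; field_simp
  have h2 : Real.log (μ / c) ≤ μ / c - 1 :=
    Real.log_le_sub_one_of_pos (by positivity)
  linarith


private lemma logdet_le {p : ℕ} {Θ : Matrix (Fin p) (Fin p) ℝ} (hΘ : Θ.PosDef)
    {c : ℝ} (hc : 0 < c) :
    Real.log Θ.det ≤ p * Real.log c + Θ.trace / c - p := by
  rw [logdet_eq hΘ, trace_eq_sum_eigs hΘ.1]
  calc ∑ i, Real.log (hΘ.1.eigenvalues i)
      ≤ ∑ i : Fin p, (Real.log c + hΘ.1.eigenvalues i / c - 1) :=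
        Finset.sum_le_sum fun i _ => log_le_aux hc (hΘ.eigenvalues_pos i)
    _ = p * Real.log c + (∑ i, hΘ.1.eigenvalues i) / c - p := by
        rw [Finset.sum_sub_distrib, Finset.sum_add_distrib, Finset.sum_div]
        simp [Finset.card_univ, mul_comm]

private lemma logdet_le_eig {p : ℕ} {Θ : Matrix (Fin p) (Fin p) ℝ} (hΘ : Θ.PosDef)
    {c : ℝ} (hc : 0 < c) (k : Fin p) :
    Real.log Θ.det ≤ Real.log (hΘ.1.eigenvalues k)
      + ((p : ℝ) - 1) * Real.log c + Θ.trace / c - ((p : ℝ) - 1) := by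
  have hp : 1 ≤ p := k.pos
  rw [logdet_eq hΘ, trace_eq_sum_eigs hΘ.1]
  rw [← Finset.add_sum_erase _ _ (mem_univ k)]
  have hcard : ((univ.erase k).card : ℝ) = (p : ℝ) - 1 := by
    rw [Finset.card_erase_of_mem (mem_univ k), Finset.card_univ, Fintype.card_fin]
    push_cast [Nat.cast_sub hp]
    ring
  have hmono : ∑ i ∈ univ.erase k, hΘ.1.eigenvalues i ≤ ∑ i, hΘ.1.eigenvalues i :=
    Finset.sum_le_sum_of_subset_of_nonneg (Finset.subset_univ _)
      (fun i _ _ => le_of_lt (hΘ.eigenvalues_pos i))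
  have hbound : ∑ i ∈ univ.erase k, Real.log (hΘ.1.eigenvalues i)
      ≤ ((p : ℝ) - 1) * Real.log c + (∑ i, hΘ.1.eigenvalues i) / c - ((p : ℝ) - 1) := by
    calc ∑ i ∈ univ.erase k, Real.log (hΘ.1.eigenvalues i)
        ≤ ∑ i ∈ univ.erase k, (Real.log c + hΘ.1.eigenvalues i / c - 1) :=
          Finset.sum_le_sum fun i _ => log_le_aux hc (hΘ.eigenvalues_pos i)
      _ = ((univ.erase k).card : ℝ) * Real.log c
            + (∑ i ∈ univ.erase k, hΘ.1.eigenvalues i) / c - ((univ.erase k).card : ℝ) := by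
          rw [Finset.sum_sub_distrib, Finset.sum_add_distrib, Finset.sum_div]
          simp [mul_comm]
      _ ≤ ((p : ℝ) - 1) * Real.log c + (∑ i, hΘ.1.eigenvalues i) / c - ((p : ℝ) - 1) := by
          rw [hcard]
          gcongr
  linarith


private lemma sum_sq_ge_one {p : ℕ} {v : Fin p → ℝ} (hv : ‖v‖ = 1) :
    1 ≤ ∑ i, v i * v i := by
  have hp : p ≠ 0 := by
    rintro rfl
    have : v = 0 := funext fun i => i.elim0
    rw [this, norm_zero] at hv
    norm_num at hv
  haveI : Nonempty (Fin p) := ⟨⟨0, Nat.pos_of_ne_zero hp⟩⟩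
  obtain ⟨i0, -, hi0⟩ := Finset.exists_mem_eq_sup (univ : Finset (Fin p))
    univ_nonempty (fun i => ‖v i‖₊)
  have hnn : ‖v‖₊ = ‖v i0‖₊ := by rw [Pi.nnnorm_def, hi0]
  have h1 : |v i0| = 1 := by
    have : ‖v i0‖ = ‖v‖ := by
      rw [← coe_nnnorm, ← coe_nnnorm, hnn]
    rw [hv] at this
    simpa using this
  have h2 : v i0 * v i0 = 1 := by
    have := congrArg (· ^ 2) h1
    simpa [sq_abs, sq] using this
  calc (1 : ℝ) = v i0 * v i0 := h2.symm
    _ ≤ ∑ i, v i * v i :=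
      Finset.single_le_sum (f := fun i => v i * v i)
        (fun i _ => mul_self_nonneg _) (mem_univ i0)

private lemma exists_eig_le {p : ℕ} {Θ : Matrix (Fin p) (Fin p) ℝ} (hΘ : Θ.PosDef)
    {v : Fin p → ℝ} (hv : ‖v‖ = 1) :
    ∃ k : Fin p, hΘ.1.eigenvalues k ≤ v ⬝ᵥ Θ.mulVec v := by
  haveI : Nonempty (Fin p) := by
    rcases Nat.eq_zero_or_pos p with h0 | h1
    · subst h0
      exfalso
      have : v = 0 := funext fun i => i.elim0
      rw [this, norm_zero] at hv; norm_num at hv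
    · exact ⟨⟨0, h1⟩⟩
  set U : Matrix (Fin p) (Fin p) ℝ := (hΘ.1.eigenvectorUnitary : Matrix (Fin p) (Fin p) ℝ)
  set μ : Fin p → ℝ := hΘ.1.eigenvalues
  set w : Fin p → ℝ := v ᵥ* U with hw
  have hUU : U * star U = 1 := (Matrix.mem_unitaryGroup_iff).mp hΘ.1.eigenvectorUnitary.2
  have hQ : v ⬝ᵥ Θ.mulVec v = ∑ i, μ i * (w i * w i) := by
    nth_rewrite 1 [hΘ.1.spectral_theorem]
    rw [Unitary.conjStarAlgAut_apply]
    rw [← Matrix.mulVec_mulVec, ← Matrix.mulVec_mulVec, Matrix.dotProduct_mulVec]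
    have hsw : (star U).mulVec v = w := by
      rw [Matrix.star_eq_conjTranspose, Matrix.conjTranspose_eq_transpose_of_trivial,
        Matrix.mulVec_transpose]
    rw [hsw]
    have hdiag : (Matrix.diagonal (RCLike.ofReal ∘ μ)) *ᵥ w = fun i => μ i * w i := by
      funext i
      rw [Matrix.mulVec_diagonal]
      simp
    rw [hdiag, dotProduct]
    exact Finset.sum_congr rfl fun i _ => by ring
  have hww : ∑ i, w i * w i = ∑ i, v i * v i := by
    have h1 : w ᵥ* star U = v := by
      rw [hw, Matrix.vecMul_vecMul, hUU, Matrix.vecMul_one]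
    have h2 : w ⬝ᵥ ((star U).mulVec v) = (w ᵥ* star U) ⬝ᵥ v := Matrix.dotProduct_mulVec _ _ _
    have hsw : (star U).mulVec v = w := by
      rw [Matrix.star_eq_conjTranspose, Matrix.conjTranspose_eq_transpose_of_trivial,
        Matrix.mulVec_transpose]
    rw [hsw, h1] at h2
    simpa [dotProduct] using h2
  obtain ⟨k, -, hk⟩ := Finset.exists_min_image (univ : Finset (Fin p)) μ univ_nonempty
  refine ⟨k, ?_⟩
  have hμk : 0 < μ k := hΘ.eigenvalues_pos k
  calc μ k ≤ μ k * ∑ i, v i * v i :=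
        le_mul_of_one_le_right (le_of_lt hμk) (sum_sq_ge_one hv)
    _ = μ k * ∑ i, w i * w i := by rw [hww]
    _ = ∑ i, μ k * (w i * w i) := Finset.mul_sum _ _ _
    _ ≤ ∑ i, μ i * (w i * w i) :=
        Finset.sum_le_sum fun i _ =>
          mul_le_mul_of_nonneg_right (hk i (mem_univ i)) (mul_self_nonneg _)
    _ = v ⬝ᵥ Θ.mulVec v := hQ.symm


/-- for λ > 0 and S positive semidefinite, the graphical lasso objective
f(Θ) = log det Θ − tr(SΘ) − λ‖Θ‖₁ tends to −∞ as the smallest eigenvalue of Θ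
tends to 0 (Rayleigh-quotient formulation) and as ‖Θ‖₁ → ∞; consequently its
supremum over positive definite matrices is finite. -/
theorem glasso_objective_coercive_and_bounded (p : ℕ) (S : Matrix (Fin p) (Fin p) ℝ)
    (hS : S.PosSemidef) (lam : ℝ) (hlam : 0 < lam) :
    (∀ B : ℝ, ∃ δ > (0:ℝ), ∀ Θ : Matrix (Fin p) (Fin p) ℝ, Θ.PosDef →
      (∃ v : Fin p → ℝ, ‖v‖ = 1 ∧ v ⬝ᵥ Θ.mulVec v < δ) →
      Real.log Θ.det - Matrix.trace (S * Θ) - lam * ∑ i, ∑ j, |Θ i j| < B) ∧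
    (∀ B : ℝ, ∃ R : ℝ, ∀ Θ : Matrix (Fin p) (Fin p) ℝ, Θ.PosDef →
      R ≤ ∑ i, ∑ j, |Θ i j| →
      Real.log Θ.det - Matrix.trace (S * Θ) - lam * ∑ i, ∑ j, |Θ i j| < B) ∧
    (∃ C : ℝ, ∀ Θ : Matrix (Fin p) (Fin p) ℝ, Θ.PosDef →
      Real.log Θ.det - Matrix.trace (S * Θ) - lam * ∑ i, ∑ j, |Θ i j| ≤ C) := by
  have hc : (0:ℝ) < 2 / lam := by positivity
  set c : ℝ := 2 / lam with hc_def
  set K : ℝ := p * Real.log c - p with hK_def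
  have hkey : ∀ Θ : Matrix (Fin p) (Fin p) ℝ, Θ.PosDef →
      Real.log Θ.det - Matrix.trace (S * Θ) - lam * ∑ i, ∑ j, |Θ i j|
        ≤ K - (lam / 2) * ∑ i, ∑ j, |Θ i j| := by
    intro Θ hΘ
    have h1 := logdet_le hΘ hc
    have h2 : Θ.trace ≤ ∑ i, ∑ j, |Θ i j| := trace_le_l1
    have h3 : 0 ≤ Matrix.trace (S * Θ) := trace_SΘ_nonneg hS hΘ
    have h4 : Θ.trace / c = (lam / 2) * Θ.trace := by
      rw [hc_def]; field_simp
    have h5 : (lam / 2) * Θ.trace ≤ (lam / 2) * ∑ i, ∑ j, |Θ i j| :=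
      mul_le_mul_of_nonneg_left h2 (by positivity)
    have h6 : 0 ≤ (lam / 2) * ∑ i, ∑ j, |Θ i j| := by positivity
    rw [h4] at h1
    linarith
  refine ⟨?_, ?_, ?_⟩
  · -- coercivity as smallest eigenvalue → 0
    intro B
    set K1 : ℝ := ((p : ℝ) - 1) * (Real.log c - 1) with hK1_def
    refine ⟨Real.exp (B - K1 - 1), Real.exp_pos _, ?_⟩
    rintro Θ hΘ ⟨v, hv, hvδ⟩
    obtain ⟨k, hk⟩ := exists_eig_le hΘ hv
    have hμk : 0 < hΘ.1.eigenvalues k := hΘ.eigenvalues_pos k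
    have ht0 : 0 < v ⬝ᵥ Θ.mulVec v := lt_of_lt_of_le hμk hk
    have hlog1 : Real.log (hΘ.1.eigenvalues k) ≤ Real.log (v ⬝ᵥ Θ.mulVec v) :=
      Real.log_le_log hμk hk
    have hlog2 : Real.log (v ⬝ᵥ Θ.mulVec v) < B - K1 - 1 := by
      have := Real.log_lt_log ht0 hvδ
      rwa [Real.log_exp] at this
    have hld := logdet_le_eig hΘ hc k
    have h2 : Θ.trace ≤ ∑ i, ∑ j, |Θ i j| := trace_le_l1
    have h3 : 0 ≤ Matrix.trace (S * Θ) := trace_SΘ_nonneg hS hΘ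
    have h4 : Θ.trace / c = (lam / 2) * Θ.trace := by
      rw [hc_def]; field_simp
    have h5 : (lam / 2) * Θ.trace ≤ (lam / 2) * ∑ i, ∑ j, |Θ i j| :=
      mul_le_mul_of_nonneg_left h2 (by positivity)
    have h6 : 0 ≤ (lam / 2) * ∑ i, ∑ j, |Θ i j| := by positivity
    rw [h4] at hld
    have hK1' : K1 = ((p : ℝ) - 1) * Real.log c - ((p : ℝ) - 1) := by
      rw [hK1_def]; ring
    linarith
  · -- coercivity as ℓ¹ norm → ∞
    intro B
    refine ⟨(2 / lam) * (K - B + 1), ?_⟩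
    intro Θ hΘ hR
    have h := hkey Θ hΘ
    have heq : (lam / 2) * ((2 / lam) * (K - B + 1)) = K - B + 1 := by
      field_simp
    have h5 : (lam / 2) * ((2 / lam) * (K - B + 1)) ≤ (lam / 2) * ∑ i, ∑ j, |Θ i j| :=
      mul_le_mul_of_nonneg_left hR (by positivity)
    linarith
  · -- boundedness of the supremum
    refine ⟨K, ?_⟩
    intro Θ hΘ
    have h := hkey Θ hΘ
    have h6 : 0 ≤ (lam / 2) * ∑ i, ∑ j, |Θ i j| := by positivity
    linarith
end

section
/- The penalized log-likelihood lᵖ(γ) = Σᵢ log f(yᵢ; γ) − λ Σ_k ‖Θ_k‖₁ of a K-component mean-zero Gaussian mixture is bounded above over all γ with π_k > 0, Σπ_k = 1 and Θ_k positive definite, for any λ > 0 and any finite sample y₁,…,y_n ∈ ℝ^p. -/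
open Matrix Finset

/-- Mean-zero multivariate Gaussian density with precision matrix Θ. -/
noncomputable def gaussMV {p : ℕ} (Θ : Matrix (Fin p) (Fin p) ℝ) (y : Fin p → ℝ) : ℝ :=
  (2 * Real.pi) ^ (-(p : ℝ) / 2) * Real.sqrt Θ.det *
    Real.exp (-(y ⬝ᵥ Θ.mulVec y) / 2)

/-- Determinant is bounded by `p! * S^p` where `S` is the ℓ₁ norm of the entries. -/
lemma det_le_fact_mul_l1_pow (p : ℕ) (M : Matrix (Fin p) (Fin p) ℝ) :
    M.det ≤ (p.factorial : ℝ) * (∑ a, ∑ b, |M a b|) ^ p := by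
  set S := ∑ a, ∑ b, |M a b| with hS
  have hent : ∀ a b, |M a b| ≤ S := by
    intro a b
    calc |M a b| ≤ ∑ b', |M a b'| :=
          Finset.single_le_sum (f := fun b' => |M a b'|) (fun _ _ => abs_nonneg _) (mem_univ b)
      _ ≤ S := by
          rw [hS]
          exact Finset.single_le_sum (f := fun a' => ∑ b', |M a' b'|)
            (fun a' _ => Finset.sum_nonneg fun b' _ => abs_nonneg _) (mem_univ a)
  calc M.det ≤ |M.det| := le_abs_self _
    _ ≤ ∑ σ : Equiv.Perm (Fin p), |(Equiv.Perm.sign σ : ℤ) • ∏ i, M (σ i) i| := by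
        rw [Matrix.det_apply]; exact Finset.abs_sum_le_sum_abs _ _
    _ ≤ ∑ σ : Equiv.Perm (Fin p), S ^ p := by
        apply Finset.sum_le_sum
        intro σ _
        rw [abs_zsmul]
        have h1 : |(Equiv.Perm.sign σ : ℤ)| = 1 := by
          rcases Int.units_eq_one_or (Equiv.Perm.sign σ) with h | h <;> simp [h]
        rw [h1, one_smul]
        calc |∏ i, M (σ i) i| = ∏ i : Fin p, |M (σ i) i| := Finset.abs_prod _ _
          _ ≤ ∏ _i : Fin p, S := Finset.prod_le_prod (fun _ _ => abs_nonneg _) (fun i _ => hent _ _)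
          _ = S ^ p := by simp
    _ = (p.factorial : ℝ) * S ^ p := by
        simp [Finset.card_univ, Fintype.card_perm, nsmul_eq_mul]

lemma quad_bound (a lam S : ℝ) (hlam : 0 < lam) (hS : 0 ≤ S) :
    a * Real.sqrt S - lam * S ≤ a ^ 2 / (4 * lam) := by
  have h := Real.sq_sqrt hS
  set t := Real.sqrt S with ht
  have h2 : 0 ≤ t := Real.sqrt_nonneg S
  rw [← h]
  have h4 : (0:ℝ) < 4 * lam := by linarith
  rw [le_div_iff₀ h4]
  nlinarith [sq_nonneg (2 * lam * t - a)]

lemma log_le_two_sqrt (S : ℝ) (hS : 0 < S) : Real.log S ≤ 2 * Real.sqrt S := by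
  have h1 : Real.log (Real.sqrt S) ≤ Real.sqrt S - 1 :=
    Real.log_le_sub_one_of_pos (Real.sqrt_pos.2 hS)
  have h2 : Real.log (Real.sqrt S) = Real.log S / 2 := Real.log_sqrt hS.le
  have h3 : 0 ≤ Real.sqrt S := Real.sqrt_nonneg S
  linarith

lemma gaussMV_pos {p : ℕ} (M : Matrix (Fin p) (Fin p) ℝ) (hM : M.PosDef) (x : Fin p → ℝ) :
    0 < gaussMV M x := by
  unfold gaussMV
  have h1 : (0:ℝ) < (2 * Real.pi) ^ (-(p : ℝ) / 2) :=
    Real.rpow_pos_of_pos (by positivity) _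
  have h2 : 0 < Real.sqrt M.det := Real.sqrt_pos.2 hM.det_pos
  positivity

lemma log_gaussMV_le {p : ℕ} (M : Matrix (Fin p) (Fin p) ℝ) (hM : M.PosDef) (x : Fin p → ℝ) :
    Real.log (gaussMV M x) ≤
      Real.log ((2 * Real.pi) ^ (-(p : ℝ) / 2)) + Real.log M.det / 2 := by
  unfold gaussMV
  have h1 : (0:ℝ) < (2 * Real.pi) ^ (-(p : ℝ) / 2) :=
    Real.rpow_pos_of_pos (by positivity) _
  have h2 : 0 < Real.sqrt M.det := Real.sqrt_pos.2 hM.det_pos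
  rw [Real.log_mul (by positivity) (Real.exp_ne_zero _), Real.log_mul h1.ne' h2.ne',
    Real.log_exp, Real.log_sqrt hM.det_pos.le]
  have h3 : 0 ≤ x ⬝ᵥ M.mulVec x := by simpa using hM.posSemidef.dotProduct_mulVec_nonneg x
  linarith

lemma log_det_le {p : ℕ} (M : Matrix (Fin p) (Fin p) ℝ) (hM : M.PosDef) :
    Real.log M.det ≤
      Real.log (p.factorial : ℝ) + (p : ℝ) * (2 * Real.sqrt (∑ a, ∑ b, |M a b|)) := by
  set S := ∑ a, ∑ b, |M a b| with hS
  have hSnn : 0 ≤ S := Finset.sum_nonneg fun a _ => Finset.sum_nonneg fun b _ => abs_nonneg _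
  have hd := det_le_fact_mul_l1_pow p M
  have hdet : 0 < M.det := hM.det_pos
  rcases Nat.eq_zero_or_pos p with hp | hp
  · subst hp
    simp only [pow_zero, mul_one, Nat.factorial_zero, Nat.cast_one, Nat.cast_zero, zero_mul,
      add_zero] at *
    exact Real.log_le_log hdet hd
  · have hSpos : 0 < S := by
      by_contra hcon
      push_neg at hcon
      have hS0 : S = 0 := le_antisymm hcon hSnn
      rw [← hS, hS0, zero_pow hp.ne', mul_zero] at hd
      linarith
    calc Real.log M.det ≤ Real.log ((p.factorial : ℝ) * S ^ p) := Real.log_le_log hdet hd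
      _ = Real.log (p.factorial : ℝ) + (p : ℝ) * Real.log S := by
          rw [Real.log_mul (by positivity) (by positivity), Real.log_pow]
      _ ≤ Real.log (p.factorial : ℝ) + (p : ℝ) * (2 * Real.sqrt S) := by
          have := log_le_two_sqrt S hSpos
          have hp' : (0:ℝ) ≤ p := Nat.cast_nonneg p
          nlinarith

/-- the ℓ₁-penalized log-likelihood of a K-component mean-zero Gaussian
mixture is bounded above over the whole parameter space, for any λ > 0 and any
finite sample. -/
theorem penalized_loglik_bounded_above (K n p : ℕ) (lam : ℝ) (hlam : 0 < lam)
    (y : Fin n → (Fin p → ℝ)) :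
    ∃ C : ℝ, ∀ (π : Fin K → ℝ) (Θ : Fin K → Matrix (Fin p) (Fin p) ℝ),
      (∀ k, 0 < π k) → ∑ k, π k = 1 → (∀ k, (Θ k).PosDef) →
      (∑ i, Real.log (∑ k, π k * gaussMV (Θ k) (y i))) -
          lam * ∑ k, ∑ a, ∑ b, |Θ k a b| ≤ C := by
  set B : ℝ := Real.log ((2 * Real.pi) ^ (-(p : ℝ) / 2)) + Real.log (p.factorial : ℝ) / 2
    with hB
  refine ⟨(K : ℝ) * ((n : ℝ) * max 0 B + ((n : ℝ) * p) ^ 2 / (4 * lam)), ?_⟩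
  intro π Θ hπ hπ1 hΘ
  have hK : K ≠ 0 := by rintro rfl; simp at hπ1
  haveI : NeZero K := ⟨hK⟩
  set S : Fin K → ℝ := fun k => ∑ a, ∑ b, |Θ k a b| with hSdef
  have hSnn : ∀ k, 0 ≤ S k :=
    fun k => Finset.sum_nonneg fun a _ => Finset.sum_nonneg fun b _ => abs_nonneg _
  -- pointwise bound on log of each Gaussian density
  have hlog_g : ∀ k i, Real.log (gaussMV (Θ k) (y i)) ≤ B + (p : ℝ) * Real.sqrt (S k) := by
    intro k i
    have h1 := log_gaussMV_le (Θ k) (hΘ k) (y i)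
    have h2 := log_det_le (Θ k) (hΘ k)
    rw [hB]
    calc Real.log (gaussMV (Θ k) (y i))
        ≤ Real.log ((2 * Real.pi) ^ (-(p : ℝ) / 2)) + Real.log (Θ k).det / 2 := h1
      _ ≤ _ := by
          have : Real.log (Θ k).det / 2 ≤
              Real.log (p.factorial : ℝ) / 2 + (p : ℝ) * Real.sqrt (S k) := by
            rw [hSdef]; simp only []
            nlinarith [h2]
          linarith
  -- bound log of the mixture by the sum of positive parts
  have hlog_f : ∀ i, Real.log (∑ k, π k * gaussMV (Θ k) (y i)) ≤
      ∑ k, max 0 (Real.log (gaussMV (Θ k) (y i))) := by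
    intro i
    set M : ℝ := ∑ k, max 0 (Real.log (gaussMV (Θ k) (y i))) with hM
    have hg : ∀ k, 0 < gaussMV (Θ k) (y i) := fun k => gaussMV_pos _ (hΘ k) _
    have hf : 0 < ∑ k, π k * gaussMV (Θ k) (y i) :=
      Finset.sum_pos (fun k _ => mul_pos (hπ k) (hg k)) univ_nonempty
    rw [Real.log_le_iff_le_exp hf]
    have hle : ∀ k, gaussMV (Θ k) (y i) ≤ Real.exp M := by
      intro k
      have h1 : Real.log (gaussMV (Θ k) (y i)) ≤ M :=
        le_trans (le_max_right 0 _)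
          (Finset.single_le_sum (f := fun k' => max 0 (Real.log (gaussMV (Θ k') (y i))))
            (fun _ _ => le_max_left 0 _) (mem_univ k))
      calc gaussMV (Θ k) (y i) = Real.exp (Real.log (gaussMV (Θ k) (y i))) :=
            (Real.exp_log (hg k)).symm
        _ ≤ Real.exp M := Real.exp_le_exp.2 h1
    calc ∑ k, π k * gaussMV (Θ k) (y i) ≤ ∑ k, π k * Real.exp M :=
          Finset.sum_le_sum fun k _ => mul_le_mul_of_nonneg_left (hle k) (hπ k).le
      _ = Real.exp M := by rw [← Finset.sum_mul, hπ1, one_mul]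
  -- put everything together
  calc (∑ i, Real.log (∑ k, π k * gaussMV (Θ k) (y i))) - lam * ∑ k, S k
      ≤ (∑ i, ∑ k, max 0 (Real.log (gaussMV (Θ k) (y i)))) - lam * ∑ k, S k := by
        have := Finset.sum_le_sum (fun i (_ : i ∈ univ) => hlog_f i)
        linarith
    _ = ∑ k, ((∑ i, max 0 (Real.log (gaussMV (Θ k) (y i)))) - lam * S k) := by
        rw [Finset.sum_comm, Finset.sum_sub_distrib, ← Finset.mul_sum]
    _ ≤ ∑ k : Fin K, ((n : ℝ) * max 0 B + ((n : ℝ) * p) ^ 2 / (4 * lam)) := by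
        apply Finset.sum_le_sum
        intro k _
        have h1 : ∀ i, max 0 (Real.log (gaussMV (Θ k) (y i))) ≤
            max 0 B + (p : ℝ) * Real.sqrt (S k) := by
          intro i
          have hnn : 0 ≤ (p : ℝ) * Real.sqrt (S k) := by positivity
          apply max_le
          · linarith [le_max_left 0 B]
          · exact le_trans (hlog_g k i) (by linarith [le_max_right 0 B])
        have h2 : (∑ i, max 0 (Real.log (gaussMV (Θ k) (y i)))) ≤
            (n : ℝ) * (max 0 B + (p : ℝ) * Real.sqrt (S k)) := by
          calc (∑ i, max 0 (Real.log (gaussMV (Θ k) (y i))))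
              ≤ ∑ _i : Fin n, (max 0 B + (p : ℝ) * Real.sqrt (S k)) :=
                Finset.sum_le_sum fun i _ => h1 i
            _ = (n : ℝ) * (max 0 B + (p : ℝ) * Real.sqrt (S k)) := by
                simp [nsmul_eq_mul]; ring
        have h3 := quad_bound ((n : ℝ) * p) lam (S k) hlam (hSnn k)
        nlinarith [h2, h3]
    _ = (K : ℝ) * ((n : ℝ) * max 0 B + ((n : ℝ) * p) ^ 2 / (4 * lam)) := by
        simp [nsmul_eq_mul]; ring
end
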